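/- Let E be a real Hilbert space and let h : E → ℝ be differentiable, convex, and η-approximately β-gradient Lipschitz, i.e. ‖∇h(θ1) − ∇h(θ2)‖ ≤ β‖θ1 − θ2‖ + η for all θ1, θ2, with β > 0, η > 0. For 0 < α ≤ 1/β define the gradient update G_α(θ) = θ − α∇h(θ). Then for all θ1, θ2, ‖G_α(θ1) − G_α(θ2)‖ ≤ ‖θ1 − θ2‖ + αη. -/

import Mathlib

open InnerProductSpace

/-- First-order condition for convex differentiable functions. -/
lemma grad_convex_aux
    {E : Type*} [NormedAddCommGroup E] [InnerProductSpace ℝ E] [CompleteSpace E]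
    (h : E → ℝ) (g : E → E)
    (hconv : ConvexOn ℝ Set.univ h)
    (hgrad : ∀ θ : E, HasGradientAt h (g θ) θ) (a b : E) :
    h a + ⟪g a, b - a⟫_ℝ ≤ h b := by
  set φ : ℝ → ℝ := fun t => h (a + t • (b - a)) with hφ
  have hφconv : ConvexOn ℝ Set.univ φ := by
    have h1 := hconv.comp_affineMap (AffineMap.lineMap a b : ℝ →ᵃ[ℝ] E)
    have : Set.univ = (AffineMap.lineMap a b : ℝ →ᵃ[ℝ] E) ⁻¹' Set.univ := by simp
    rw [this]
    convert h1 using 1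
    · rfl
    · rfl
    · rfl
    · rfl
    funext t
    simp only [φ, Function.comp_apply, AffineMap.lineMap_apply_module]
    congr 1
    module
  have hc : HasDerivAt (fun t : ℝ => a + t • (b - a)) (b - a) 0 := by
    simpa using ((hasDerivAt_id (0:ℝ)).smul_const (b - a)).const_add a
  have hfd : HasFDerivAt h (InnerProductSpace.toDual ℝ E (g a)) (a + (0:ℝ) • (b - a)) := by
    simpa using (hasGradientAt_iff_hasFDerivAt.mp (hgrad a))
  have hd : HasDerivAt φ ⟪g a, b - a⟫_ℝ 0 := by
    have := hfd.comp_hasDerivAt (0:ℝ) hc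
    simpa [φ, InnerProductSpace.toDual_apply_apply, Function.comp_def] using this
  have hslope := hφconv.le_slope_of_hasDerivAt (Set.mem_univ (0:ℝ)) (Set.mem_univ (1:ℝ))
    one_pos hd
  have h0 : φ 0 = h a := by simp [φ]
  have h1 : φ 1 = h b := by simp [φ]
  rw [slope_def_field, h0, h1] at hslope
  have : ⟪g a, b - a⟫_ℝ ≤ h b - h a := by
    simpa using hslope
  linarith

/-- One-sided strengthened first-order condition. -/
lemma grad_convex_strong
    {E : Type*} [NormedAddCommGroup E] [InnerProductSpace ℝ E] [CompleteSpace E]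
    (h : E → ℝ) (g : E → E) (β η : ℝ) (hβ : 0 < β) (hη : 0 < η)
    (hconv : ConvexOn ℝ Set.univ h)
    (hgrad : ∀ θ : E, HasGradientAt h (g θ) θ)
    (happrox : ∀ θ1 θ2 : E, ‖g θ1 - g θ2‖ ≤ β * ‖θ1 - θ2‖ + η)
    (θ1 θ2 : E) :
    h θ1 + ⟪g θ1, θ2 - θ1⟫_ℝ + (max (‖g θ2 - g θ1‖ - η) 0)^2 / (4*β) ≤ h θ2 := by
  set v : E := g θ2 - g θ1 with hv
  set t : ℝ := ‖v‖ with ht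
  by_cases hcase : t ≤ η
  · have hm : max (t - η) 0 = 0 := max_eq_right (by linarith)
    rw [hm]
    simpa using grad_convex_aux h g hconv hgrad θ1 θ2
  · push_neg at hcase
    have htpos : 0 < t := hη.trans hcase
    have hm : max (t - η) 0 = t - η := max_eq_left (by linarith)
    set s : ℝ := (t - η) / (2 * β * t) with hs
    have hspos : 0 < s := by
      apply div_pos (by linarith) (by positivity)
    set w : E := θ2 - s • v with hw
    -- (i) convexity at θ1 applied to w
    have hi : h θ1 + ⟪g θ1, w - θ1⟫_ℝ ≤ h w := grad_convex_aux h g hconv hgrad θ1 w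
    -- (ii) convexity at w applied to θ2
    have hii : h w + ⟪g w, θ2 - w⟫_ℝ ≤ h θ2 := grad_convex_aux h g hconv hgrad w θ2
    -- inner product computations
    have hwsub : w - θ2 = -(s • v) := by rw [hw]; abel
    have hwθ1 : w - θ1 = (θ2 - θ1) - s • v := by rw [hw]; abel
    have e1 : ⟪g θ1, w - θ1⟫_ℝ = ⟪g θ1, θ2 - θ1⟫_ℝ - s * ⟪g θ1, v⟫_ℝ := by
      rw [hwθ1, inner_sub_right, inner_smul_right]
    have e2 : ⟪g w, θ2 - w⟫_ℝ = s * ⟪g w, v⟫_ℝ := by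
      have : θ2 - w = s • v := by rw [hw]; abel
      rw [this, inner_smul_right]
    -- key bound on ⟪g w - g θ1, v⟫
    have hbound : ‖g w - g θ2‖ ≤ β * (s * t) + η := by
      have := happrox w θ2
      have hn : ‖w - θ2‖ = s * t := by
        rw [hwsub, norm_neg, norm_smul, Real.norm_eq_abs, abs_of_pos hspos]
      rw [hn] at this
      exact this
    have hinner : ⟪g w - g θ2, v⟫_ℝ ≥ -((β * (s * t) + η) * t) := by
      have h1 : |⟪g w - g θ2, v⟫_ℝ| ≤ ‖g w - g θ2‖ * ‖v‖ := abs_real_inner_le_norm _ _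
      have h2 : ‖g w - g θ2‖ * ‖v‖ ≤ (β * (s * t) + η) * t := by
        apply mul_le_mul_of_nonneg_right hbound (norm_nonneg v) |>.trans_eq rfl
      nlinarith [neg_abs_le ⟪g w - g θ2, v⟫_ℝ]
    have hvv : ⟪v, v⟫_ℝ = t^2 := by rw [ht, real_inner_self_eq_norm_sq]
    have hsplit : ⟪g w, v⟫_ℝ - ⟪g θ1, v⟫_ℝ = t^2 + ⟪g w - g θ2, v⟫_ℝ := by
      have : g w - g θ1 = v + (g w - g θ2) := by rw [hv]; abel
      have h3 : ⟪g w - g θ1, v⟫_ℝ = ⟪v, v⟫_ℝ + ⟪g w - g θ2, v⟫_ℝ := by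
        rw [this, inner_add_left]
      rw [← inner_sub_left, h3, hvv]
    -- combine
    have hcomb : h θ1 + ⟪g θ1, θ2 - θ1⟫_ℝ + s * (t^2 + ⟪g w - g θ2, v⟫_ℝ) ≤ h θ2 := by
      rw [e1] at hi
      rw [e2] at hii
      have h7 : s * ⟪g w, v⟫_ℝ - s * ⟪g θ1, v⟫_ℝ = s * (t^2 + ⟪g w - g θ2, v⟫_ℝ) := by
        rw [← mul_sub, hsplit]
      linarith
    have hst : s * t = (t - η) / (2 * β) := by
      rw [hs]
      field_simp
    have hfinal : s * (t^2 + ⟪g w - g θ2, v⟫_ℝ) ≥ (t - η)^2 / (4*β) := by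
      have h4 : s * (t^2 + ⟪g w - g θ2, v⟫_ℝ) ≥ s * (t^2 - (β * (s * t) + η) * t) := by
        apply mul_le_mul_of_nonneg_left _ hspos.le
        linarith [hinner]
      have h5 : s * (t^2 - (β * (s * t) + η) * t) = (s*t) * (t - η) - β * (s*t)^2 := by ring
      rw [h5, hst] at h4
      have h6 : (t - η) / (2 * β) * (t - η) - β * ((t - η) / (2 * β))^2 = (t-η)^2/(4*β) := by
        field_simp
        ring
      linarith [h4, h6.symm.le, h6.le]
    rw [hm]
    linarith

/-- Lemma 4.3(ii): for a convex, η-approximately β-gradient Lipschitz function and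
step size `0 < α ≤ 1/β`, the gradient update `G_α(θ) = θ - α∇h(θ)` is
αη-approximately non-expansive. -/
theorem approx_nonexpansive
    {E : Type*} [NormedAddCommGroup E] [InnerProductSpace ℝ E] [CompleteSpace E]
    (h : E → ℝ) (g : E → E) (β η : ℝ) (hβ : 0 < β) (hη : 0 < η)
    (hconv : ConvexOn ℝ Set.univ h)
    (hgrad : ∀ θ : E, HasGradientAt h (g θ) θ)
    (happrox : ∀ θ1 θ2 : E, ‖g θ1 - g θ2‖ ≤ β * ‖θ1 - θ2‖ + η)
    (α : ℝ) (hα : 0 < α) (hαβ : α ≤ 1 / β)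
    (G : E → E) (hG : ∀ θ : E, G θ = θ - α • g θ) :
    ∀ θ1 θ2 : E, ‖G θ1 - G θ2‖ ≤ ‖θ1 - θ2‖ + α * η := by
  intro θ1 θ2
  set u : E := θ1 - θ2 with hu
  set v : E := g θ1 - g θ2 with hv
  set t : ℝ := ‖v‖ with ht
  set m : ℝ := max (t - η) 0 with hm
  have hm0 : 0 ≤ m := le_max_right _ _
  have htm : t ≤ m + η := by
    rcases le_or_gt t η with hc | hc
    · have : m = 0 ∨ t - η ≤ m := Or.inr (le_max_left _ _); linarith [le_max_right (t-η) (0:ℝ)]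
    · have : m = t - η := max_eq_left (by linarith); linarith
  -- co-coercivity-like bound
  have hkey : m^2 / (2*β) ≤ ⟪v, u⟫_ℝ := by
    have k1 := grad_convex_strong h g β η hβ hη hconv hgrad happrox θ1 θ2
    have k2 := grad_convex_strong h g β η hβ hη hconv hgrad happrox θ2 θ1
    have hrev : ‖g θ1 - g θ2‖ = ‖g θ2 - g θ1‖ := norm_sub_rev _ _
    have e1 : ⟪g θ1, θ2 - θ1⟫_ℝ + ⟪g θ2, θ1 - θ2⟫_ℝ = -⟪v, u⟫_ℝ := by
      have : ⟪v, u⟫_ℝ = ⟪g θ1, θ1 - θ2⟫_ℝ - ⟪g θ2, θ1 - θ2⟫_ℝ := by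
        rw [hv, hu, inner_sub_left]
      have h2 : ⟪g θ1, θ2 - θ1⟫_ℝ = -⟪g θ1, θ1 - θ2⟫_ℝ := by
        rw [← inner_neg_right]; congr 1; abel
      rw [this, h2]; ring
    have hmeq1 : max (‖g θ2 - g θ1‖ - η) 0 = m := by rw [hm, ht, hv, ← hrev]
    have hmeq2 : max (‖g θ1 - g θ2‖ - η) 0 = m := by rw [hm, ht, hv]
    rw [hmeq1] at k1
    rw [hmeq2] at k2
    have hsum : -⟪v, u⟫_ℝ + m^2/(4*β) + m^2/(4*β) ≤ 0 := by linarith [k1, k2, e1]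
    have : m^2/(4*β) + m^2/(4*β) = m^2/(2*β) := by field_simp; ring
    linarith
  -- norm bound on v
  have hvb : t ≤ β * ‖u‖ + η := by rw [ht, hv, hu]; exact happrox θ1 θ2
  have hmu : m ≤ β * ‖u‖ := by
    rcases max_cases (t - η) (0:ℝ) with ⟨he, _⟩ | ⟨he, _⟩
    · rw [hm, he]; linarith
    · rw [hm, he]; positivity
  have hαm : α * m ≤ ‖u‖ := by
    have h1 : α * m ≤ (1/β) * m := mul_le_mul_of_nonneg_right hαβ hm0
    have h2 : (1/β) * m ≤ (1/β) * (β * ‖u‖) := by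
      apply mul_le_mul_of_nonneg_left hmu (by positivity)
    have h3 : (1/β) * (β * ‖u‖) = ‖u‖ := by field_simp
    linarith
  -- expand the square
  have hGsub : G θ1 - G θ2 = u - α • v := by
    rw [hG θ1, hG θ2, hu, hv, smul_sub]; abel
  have hsq : ‖G θ1 - G θ2‖^2 = ‖u‖^2 - 2 * (α * ⟪v, u⟫_ℝ) + α^2 * t^2 := by
    rw [hGsub, norm_sub_sq_real, inner_smul_right, norm_smul, Real.norm_eq_abs,
      abs_of_pos hα, mul_pow, real_inner_comm]
  have hαα : α^2 ≤ α / β := by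
    have h1 : α * α ≤ α * (1/β) := mul_le_mul_of_nonneg_left hαβ hα.le
    have h2 : α * (1/β) = α / β := by ring
    rw [pow_two]
    linarith
  -- final bound on squared norm
  have hsqb : ‖G θ1 - G θ2‖^2 ≤ (‖u‖ + α * η)^2 := by
    have b1 : α * (m^2/(2*β)) ≤ α * ⟪v, u⟫_ℝ := mul_le_mul_of_nonneg_left hkey hα.le
    have b2 : α^2 * t^2 ≤ α^2 * (m + η)^2 := by
      apply mul_le_mul_of_nonneg_left _ (by positivity)
      have htnn : 0 ≤ t := norm_nonneg v
      nlinarith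
    have b3 : α / β * m^2 ≤ 2 * (α * (m^2/(2*β))) := by
      have : 2 * (α * (m^2/(2*β))) = α/β * m^2 := by field_simp
      linarith
    have b4 : α^2 * m^2 ≤ α/β * m^2 := by nlinarith [sq_nonneg m]
    have b5 : α^2 * (2 * m * η) ≤ 2 * α * η * ‖u‖ := by
      have : α^2 * (2*m*η) = 2 * η * α * (α * m) := by ring
      rw [this]
      have := mul_le_mul_of_nonneg_left hαm (by positivity : (0:ℝ) ≤ 2 * η * α)
      linarith
    nlinarith [hsq, b1, b2, b3, b4, b5]
  have hnn : 0 ≤ ‖u‖ + α * η := by positivity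
  have h1 := Real.sqrt_le_sqrt hsqb
  rwa [Real.sqrt_sq (norm_nonneg _), Real.sqrt_sq hnn] at h1
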